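/- Let G be a mixed graph with girth s+1 and let X = λI - H_η(G). For l ∈ {1,...,s}, every permutation σ of the vertex set that moves exactly l vertices and satisfies ∏_{x∈V} X_{x,σ(x)} ≠ 0 is a product of disjoint transpositions. -/

import Mathlib

open Complex Polynomial

private lemma walk_aux {V : Type} (G : SimpleGraph V) (f : V → V) (x : V)
    (hadj : ∀ i : ℕ, G.Adj (f^[i] x) (f^[i+1] x)) :
    ∀ n : ℕ, ∃ w : G.Walk x (f^[n] x),
      w.support = (List.range (n+1)).map (fun i => f^[i] x) ∧
      w.edges = (List.range n).map (fun i => s(f^[i] x, f^[i+1] x)) := by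
  intro n
  induction n with
  | zero => exact ⟨SimpleGraph.Walk.nil, by simp, by simp⟩
  | succ n ih =>
    obtain ⟨w, hs, he⟩ := ih
    refine ⟨w.concat (hadj n), ?_, ?_⟩
    · rw [SimpleGraph.Walk.support_concat, hs,
        List.range_succ (n := n+1), List.map_append]
      simp only [List.map_cons, List.map_nil]
    · rw [SimpleGraph.Walk.edges_concat, he, List.concat_eq_append,
        List.range_succ, List.map_append]
      simp only [List.map_cons, List.map_nil]

/-- If `G` is a mixed graph with girth `s+1` and `X = λI - H_η(G)` (over `ℂ[λ]`),
then every permutation `σ` moving exactly `l ≤ s` vertices with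
`∏_x X_{x,σ(x)} ≠ 0` is a product of disjoint transpositions, i.e. `σ² = id`. -/
theorem stmt_6 {V : Type} [Fintype V] [DecidableEq V] (η : ℝ)
    (A : V → V → Prop) [DecidableRel A] (hirr : ∀ x, ¬ A x x)
    (G : SimpleGraph V)
    (hG : ∀ x y, G.Adj x y ↔ (x ≠ y ∧ (A x y ∨ A y x)))
    (H : Matrix V V ℂ)
    (hH : ∀ x y, H x y =
      if A x y ∧ A y x then 1
      else if A x y then Complex.exp (η * Complex.I)
      else if A y x then Complex.exp (-(η : ℂ) * Complex.I)
      else 0)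
    (s : ℕ) (hgirth : G.girth = (s + 1 : ℕ))
    (X : Matrix V V (Polynomial ℂ))
    (hX : X = (Polynomial.X : Polynomial ℂ) • (1 : Matrix V V (Polynomial ℂ)) - H.map Polynomial.C)
    (l : ℕ) (hl1 : 1 ≤ l) (hls : l ≤ s)
    (σ : Equiv.Perm V)
    (hmove : (Finset.univ.filter (fun x => σ x ≠ x)).card = l)
    (hprod : ∏ x : V, X x (σ x) ≠ 0) :
    ∀ x : V, σ (σ x) = x := by
  -- every moved vertex is adjacent to its image
  have hfac : ∀ y : V, X y (σ y) ≠ 0 := by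
    intro y
    exact fun h0 => hprod (Finset.prod_eq_zero (Finset.mem_univ y) h0)
  have hAdj : ∀ y : V, σ y ≠ y → G.Adj y (σ y) := by
    intro y hy
    have hXy := hfac y
    rw [hX] at hXy
    have h1 : (1 : Matrix V V (Polynomial ℂ)) y (σ y) = 0 :=
      Matrix.one_apply_ne (fun h => hy h.symm)
    have hXy' : H y (σ y) ≠ 0 := by
      intro h
      apply hXy
      simp [Matrix.sub_apply, Matrix.smul_apply, h1, Matrix.map_apply, h]
    have hA : A y (σ y) ∨ A (σ y) y := by
      by_contra hc
      push_neg at hc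
      apply hXy'
      rw [hH]
      simp [hc.1, hc.2]
    exact (hG y (σ y)).mpr ⟨fun h => hy h.symm, hA⟩
  intro x
  by_contra hx
  have hx1 : σ x ≠ x := fun h => hx (by rw [h, h])
  -- x is a periodic point
  have hper : x ∈ Function.periodicPts (⇑σ) := by
    refine ⟨orderOf σ, orderOf_pos σ, ?_⟩
    show (⇑σ)^[orderOf σ] x = x
    rw [← Equiv.Perm.coe_pow, pow_orderOf_eq_one]
    rfl
  set k := Function.minimalPeriod (⇑σ) x with hk
  have hkpos : 0 < k := Function.minimalPeriod_pos_of_mem_periodicPts hper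
  have hiter : (⇑σ)^[k] x = x := Function.iterate_minimalPeriod
  have hinj : (Set.Iio k).InjOn ((⇑σ)^[·] x) := Function.iterate_injOn_Iio_minimalPeriod
  -- every point in the orbit is moved
  have hmov : ∀ i : ℕ, σ ((⇑σ)^[i] x) ≠ (⇑σ)^[i] x := by
    intro i h
    apply hx1
    have : (⇑σ)^[i] (σ x) = (⇑σ)^[i] x := by
      rw [← Function.iterate_succ_apply, Function.iterate_succ_apply']
      exact h
    exact (σ.injective.iterate i) this
  have hadj : ∀ i : ℕ, G.Adj ((⇑σ)^[i] x) ((⇑σ)^[i+1] x) := by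
    intro i
    rw [Function.iterate_succ_apply']
    exact hAdj _ (hmov i)
  -- k ≥ 3
  have hk1 : k ≠ 1 := by
    intro h
    rw [h] at hiter
    exact hx1 hiter
  have hk2 : k ≠ 2 := by
    intro h
    rw [h] at hiter
    exact hx hiter
  have hk3 : 3 ≤ k := by omega
  -- the σ² on any orbit point is not identity
  have hx2 : (⇑σ)^[2] x ≠ x := hx
  -- k ≤ l
  have hkl : k ≤ l := by
    rw [← hmove]
    have : (Finset.range k).card ≤ (Finset.univ.filter (fun x => σ x ≠ x)).card := by
      apply Finset.card_le_card_of_injOn (fun i => (⇑σ)^[i] x)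
      · intro i hi
        simp only [Finset.mem_filter, Finset.mem_univ, true_and]
        simpa using hmov i
      · intro i hi j hj hij
        exact hinj (Finset.mem_range.mp hi) (Finset.mem_range.mp hj) hij
    simpa using this
  -- construct a cycle of length k
  obtain ⟨w, hsupp, hedges⟩ := walk_aux G (⇑σ) x hadj k
  have hlen : w.length = k := by
    have := congrArg List.length hsupp
    rw [SimpleGraph.Walk.length_support] at this
    simpa using this
  set w' : G.Walk x x := w.copy rfl hiter with hw'
  have hsupp' : w'.support = (List.range (k+1)).map (fun i => (⇑σ)^[i] x) := by
    rw [hw', SimpleGraph.Walk.support_copy, hsupp]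
  have hedges' : w'.edges = (List.range k).map (fun i => s((⇑σ)^[i] x, (⇑σ)^[i+1] x)) := by
    rw [hw', SimpleGraph.Walk.edges_copy, hedges]
  have hlen' : w'.length = k := by rw [hw', SimpleGraph.Walk.length_copy, hlen]
  -- helper for index wraparound
  have key : ∀ i j : ℕ, i < k → j < k → (⇑σ)^[i] x = (⇑σ)^[j] x → i = j := fun i j hi hj h =>
    hinj hi hj h
  have keysucc : ∀ i j : ℕ, i < k → j < k → (⇑σ)^[i+1] x = (⇑σ)^[j+1] x → i = j := by
    intro i j hi hj h
    apply key i j hi hj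
    apply σ.injective.iterate 1
    simpa [Function.iterate_succ_apply', Function.iterate_one] using h
  have hcyc : w'.IsCycle := by
    rw [SimpleGraph.Walk.isCycle_def]
    refine ⟨⟨?_⟩, ?_, ?_⟩
    · -- edges nodup
      rw [hedges']
      apply List.Nodup.map_on _ List.nodup_range
      intro i hi j hj hij
      rw [List.mem_range] at hi hj
      rw [Sym2.eq_iff] at hij
      rcases hij with ⟨h1, _⟩ | ⟨h1, h2⟩
      · exact key i j hi hj h1
      · -- σ^[i] x = σ^[j+1] x and σ^[i+1] x = σ^[j] x
        exfalso
        apply hx2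
        have h3 : (⇑σ)^[i+1+1] x = (⇑σ)^[j+1] x := by
          rw [Function.iterate_succ_apply' (⇑σ) (i+1), Function.iterate_succ_apply' (⇑σ) j, h2]
        have h4 : (⇑σ)^[2] ((⇑σ)^[i] x) = (⇑σ)^[i] x := by
          rw [← Function.iterate_add_apply]
          have h24 : 2 + i = i + 1 + 1 := by omega
          rw [h24, h3, ← h1]
        have h5 : (⇑σ)^[i] ((⇑σ)^[2] x) = (⇑σ)^[i] x := by
          rw [← Function.iterate_add_apply, Nat.add_comm, Function.iterate_add_apply, h4]
        exact σ.injective.iterate i h5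
    · -- not nil
      intro h
      have : w'.length = 0 := by rw [h]; rfl
      omega
    · -- support tail nodup
      rw [hsupp', List.range_succ_eq_map, List.map_cons, List.tail_cons, List.map_map]
      apply List.Nodup.map_on _ List.nodup_range
      intro i hi j hj hij
      rw [List.mem_range] at hi hj
      simp only [Function.comp, Nat.succ_eq_add_one] at hij
      -- hij : σ^[i+1] x = σ^[j+1] x with i,j < k; indices i+1,j+1 ∈ [1,k]
      rcases Nat.lt_or_ge (i+1) k with hik | hik
      · rcases Nat.lt_or_ge (j+1) k with hjk | hjk
        · exact Nat.succ_injective (key _ _ hik hjk hij)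
        · -- j+1 = k, so σ^[i+1] x = x = σ^[0] x ⇒ i+1 = 0, impossible
          have hjk' : j + 1 = k := by omega
          exfalso
          have : (⇑σ)^[i+1] x = (⇑σ)^[0] x := by
            rw [hij, hjk', hiter]; rfl
          have := key _ _ hik hkpos this
          omega
      · have hik' : i + 1 = k := by omega
        rcases Nat.lt_or_ge (j+1) k with hjk | hjk
        · exfalso
          have : (⇑σ)^[j+1] x = (⇑σ)^[0] x := by
            rw [← hij, hik', hiter]; rfl
          have := key _ _ hjk hkpos this
          omega
        · omega
  -- girth bound
  have hegirth : G.egirth ≤ w'.length := by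
    exact SimpleGraph.le_egirth.mp le_rfl x w' hcyc
  have hegirth_eq : G.egirth = (s + 1 : ℕ) := by
    have hne : G.egirth ≠ ⊤ := by
      intro h
      rw [SimpleGraph.girth, h] at hgirth
      simp at hgirth
    rw [SimpleGraph.girth] at hgirth
    rw [← hgirth, ENat.coe_toNat hne]
  rw [hegirth_eq, hlen'] at hegirth
  have : s + 1 ≤ k := by exact_mod_cast hegirth
  omega
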